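/- Let a,b,c,d ∈ ℤ with ad − bc = 1 and c ≠ 0. Let ε_x, ε_y ∈ {0,1}, u ∈ ℂ, and v ∈ ℂ with v ≠ 0. Set X = (−1)^{ε_x}·((1,1),(0,1)), Y = (−1)^{ε_y}·((1,u),(0,1)), and H = diag(v, v⁻¹) in SL(2,ℂ). Then the relations X^a Y^c = H⁻¹ X H, X^b Y^d = H⁻¹ Y H, and X Y = Y X all hold if and only if: u = (v⁻² − a)/c, (v + v⁻¹)² = a + d + 2, (a+1)ε_x + c·ε_y is even, and b·ε_x + (d+1)ε_y is even. -/

import Mathlib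

open Matrix

lemma neg_one_zpow_inv (m : ℤ) : ((-1 : ℂ) ^ m)⁻¹ = (-1 : ℂ) ^ m := by
  rcases Int.even_or_odd m with h | h
  · rw [h.neg_one_zpow]; norm_num
  · rw [h.neg_one_zpow]; norm_num

lemma neg_one_zpow_eq (m n : ℤ) : ((-1 : ℂ) ^ m = (-1) ^ n) ↔ Even (m - n) := by
  rw [Int.even_sub]
  rcases Int.even_or_odd m with h | h <;> rcases Int.even_or_odd n with h' | h'
  · simp [h.neg_one_zpow, h'.neg_one_zpow, iff_true_intro h, iff_true_intro h']
  · norm_num [h.neg_one_zpow, h'.neg_one_zpow, iff_true_intro h,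
      Int.not_even_iff_odd.mpr h']
  · norm_num [h.neg_one_zpow, h'.neg_one_zpow, iff_true_intro h',
      Int.not_even_iff_odd.mpr h]
  · simp [h.neg_one_zpow, h'.neg_one_zpow, Int.not_even_iff_odd.mpr h,
      Int.not_even_iff_odd.mpr h']

lemma smul_tri (s t : ℂ) : s • !![1, t; 0, 1] = !![s, s*t; 0, s] := by
  ext i j; fin_cases i <;> fin_cases j <;> simp

lemma prod_tri (s1 s2 p q : ℂ) :
    (s1 • !![1, p; 0, 1]) * (s2 • !![1, q; 0, 1]) = (s1*s2) • !![1, p+q; 0, 1] := by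
  rw [smul_tri, smul_tri, smul_tri]
  ext i j; fin_cases i <;> fin_cases j <;> simp [Matrix.mul_apply, Fin.sum_univ_two] <;> ring

lemma conj_tri (s p v : ℂ) (hv : v ≠ 0) :
    !![v⁻¹, 0; 0, v] * (s • !![1, p; 0, 1]) * !![v, 0; 0, v⁻¹]
      = s • !![1, p * (v⁻¹)^2; 0, 1] := by
  rw [smul_tri, smul_tri]
  ext i j; fin_cases i <;> fin_cases j
  all_goals simp [Matrix.mul_apply, Fin.sum_univ_two]
  all_goals try field_simp
  all_goals try ring
  all_goals try tauto

lemma tri_eq (s1 s2 p q : ℂ) :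
    s1 • !![1, p; 0, 1] = s2 • !![1, q; 0, 1] ↔ s1 = s2 ∧ s1 * p = s2 * q := by
  rw [smul_tri, smul_tri]
  constructor
  · intro h
    exact ⟨congrFun (congrFun h 0) 0, congrFun (congrFun h 0) 1⟩
  · rintro ⟨rfl, h2⟩
    rw [h2]

lemma upow (t : ℂ) (ε : ℤ) (M : Matrix.SpecialLinearGroup (Fin 2) ℂ)
    (hM : (M : Matrix (Fin 2) (Fin 2) ℂ) = ((-1 : ℂ) ^ ε) • !![1, t; 0, 1]) (n : ℤ) :
    ((M ^ n : Matrix.SpecialLinearGroup (Fin 2) ℂ) : Matrix (Fin 2) (Fin 2) ℂ)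
      = ((-1 : ℂ) ^ (ε * n)) • !![1, (n : ℂ) * t; 0, 1] := by
  have h0 : (-1 : ℂ) ≠ 0 := by norm_num
  have hinv : ((M⁻¹ : Matrix.SpecialLinearGroup (Fin 2) ℂ) : Matrix (Fin 2) (Fin 2) ℂ)
      = ((-1 : ℂ) ^ ε) • !![1, -t; 0, 1] := by
    show adjugate (M : Matrix (Fin 2) (Fin 2) ℂ) = _
    rw [hM, smul_tri, adjugate_fin_two, smul_tri]
    ext i j; fin_cases i <;> fin_cases j <;> simp
  induction n using Int.induction_on with
  | zero => ext i j; fin_cases i <;> fin_cases j <;> simp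
  | succ k ih =>
      have key : ((-1:ℂ))^(ε*((k:ℤ)+1)) = (-1)^(ε*(k:ℤ)) * (-1)^ε := by
        rw [mul_add, mul_one, zpow_add₀ h0]
      rw [_root_.zpow_add_one, Matrix.SpecialLinearGroup.coe_mul, ih, hM, key,
        smul_tri, smul_tri, smul_tri]
      ext i j; fin_cases i <;> fin_cases j <;>
        simp [Matrix.mul_apply, Fin.sum_univ_two] <;> push_cast <;> ring
  | pred k ih =>
      have key : ((-1:ℂ))^(ε*(-(k:ℤ)-1)) = (-1)^(ε*(-(k:ℤ))) * (-1)^ε := by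
        rw [mul_sub, mul_one, zpow_sub₀ h0, div_eq_mul_inv, neg_one_zpow_inv]
      rw [_root_.zpow_sub_one, Matrix.SpecialLinearGroup.coe_mul, ih, hinv, key,
        smul_tri, smul_tri, smul_tri]
      ext i j; fin_cases i <;> fin_cases j <;>
        simp [Matrix.mul_apply, Fin.sum_univ_two] <;> push_cast <;> ring

lemma alg (a b c d : ℤ) (h1 : a * d - b * c = 1) (hc : (c:ℂ) ≠ 0) (u v : ℂ) (hv : v ≠ 0) :
    ((a:ℂ) + c * u = (v⁻¹)^2 ∧ (b:ℂ) + d * u = u * (v⁻¹)^2) ↔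
      (u = ((v⁻¹)^2 - (a:ℂ)) / c ∧ (v + v⁻¹)^2 = (a:ℂ) + d + 2) := by
  have h1' : (a:ℂ) * d - b * c = 1 := by exact_mod_cast h1
  constructor
  · rintro ⟨e1, e2⟩
    field_simp at e1 e2
    constructor
    · rw [eq_div_iff hc]
      field_simp
      linear_combination e1
    · field_simp
      linear_combination ((d:ℂ)*v^2 - 1) * e1 - (c:ℂ)*v^2 * e2 - v^4 * h1'
  · rintro ⟨hu, hvv⟩
    subst hu
    field_simp at hvv ⊢
    constructor
    · ring
    · linear_combination (-v^4) * h1' - hvv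

lemma even_shift (x y p q : ℤ) : Even (x + y - p + 2 * q) ↔ Even (x + y - p) := by
  rw [show x + y - p + 2 * q = (x + y - p) + 2 * q by ring, Int.even_add]
  simp [Int.even_mul]

theorem stmt_4 (a b c d : ℤ) (h1 : a * d - b * c = 1) (hc : c ≠ 0)
    (εx εy : ℤ) (hεx : εx = 0 ∨ εx = 1) (hεy : εy = 0 ∨ εy = 1)
    (u v : ℂ) (hv : v ≠ 0)
    (X Y H : Matrix.SpecialLinearGroup (Fin 2) ℂ)
    (hX : (X : Matrix (Fin 2) (Fin 2) ℂ) = ((-1 : ℂ) ^ εx) • !![1, 1; 0, 1])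
    (hY : (Y : Matrix (Fin 2) (Fin 2) ℂ) = ((-1 : ℂ) ^ εy) • !![1, u; 0, 1])
    (hH : (H : Matrix (Fin 2) (Fin 2) ℂ) = !![v, 0; 0, v⁻¹]) :
    (X ^ a * Y ^ c = H⁻¹ * X * H ∧ X ^ b * Y ^ d = H⁻¹ * Y * H ∧ X * Y = Y * X) ↔
      (u = ((v⁻¹) ^ 2 - (a : ℂ)) / (c : ℂ) ∧
        (v + v⁻¹) ^ 2 = (a : ℂ) + (d : ℂ) + 2 ∧
        Even ((a + 1) * εx + c * εy) ∧ Even (b * εx + (d + 1) * εy)) := by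
  have h0 : (-1 : ℂ) ≠ 0 := by norm_num
  have hcC : (c : ℂ) ≠ 0 := Int.cast_ne_zero.mpr hc
  have hsx : ((-1 : ℂ) ^ εx) ≠ 0 := zpow_ne_zero _ h0
  have hsy : ((-1 : ℂ) ^ εy) ≠ 0 := zpow_ne_zero _ h0
  have hHinv : ((H⁻¹ : Matrix.SpecialLinearGroup (Fin 2) ℂ) : Matrix (Fin 2) (Fin 2) ℂ)
      = !![v⁻¹, 0; 0, v] := by
    show adjugate (H : Matrix (Fin 2) (Fin 2) ℂ) = _
    rw [hH, adjugate_fin_two]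
    norm_num
  have rel1 : (X ^ a * Y ^ c = H⁻¹ * X * H) ↔
      (Even (εx * a + εy * c - εx) ∧ (a : ℂ) + c * u = (v⁻¹)^2) := by
    rw [show (X ^ a * Y ^ c = H⁻¹ * X * H) ↔ ((X ^ a * Y ^ c : Matrix.SpecialLinearGroup (Fin 2) ℂ) : Matrix (Fin 2) (Fin 2) ℂ) = ((H⁻¹ * X * H : Matrix.SpecialLinearGroup (Fin 2) ℂ) : Matrix (Fin 2) (Fin 2) ℂ) from Subtype.ext_iff, Matrix.SpecialLinearGroup.coe_mul,
      Matrix.SpecialLinearGroup.coe_mul, Matrix.SpecialLinearGroup.coe_mul,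
      upow 1 εx X hX, upow u εy Y hY, hHinv, hX, hH, prod_tri,
      conj_tri _ _ _ hv, ← zpow_add₀ h0, tri_eq, neg_one_zpow_eq]
    refine and_congr_right fun hEven => ?_
    have hs : ((-1 : ℂ)) ^ (εx * a + εy * c) = (-1) ^ εx :=
      (neg_one_zpow_eq _ _).mpr hEven
    rw [hs, mul_right_inj' hsx]
    constructor <;> intro h <;> linear_combination h
  have rel2 : (X ^ b * Y ^ d = H⁻¹ * Y * H) ↔
      (Even (εx * b + εy * d - εy) ∧ (b : ℂ) + d * u = u * (v⁻¹)^2) := by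
    rw [show (X ^ b * Y ^ d = H⁻¹ * Y * H) ↔ ((X ^ b * Y ^ d : Matrix.SpecialLinearGroup (Fin 2) ℂ) : Matrix (Fin 2) (Fin 2) ℂ) = ((H⁻¹ * Y * H : Matrix.SpecialLinearGroup (Fin 2) ℂ) : Matrix (Fin 2) (Fin 2) ℂ) from Subtype.ext_iff, Matrix.SpecialLinearGroup.coe_mul,
      Matrix.SpecialLinearGroup.coe_mul, Matrix.SpecialLinearGroup.coe_mul,
      upow 1 εx X hX, upow u εy Y hY, hHinv, hY, hH, prod_tri,
      conj_tri _ _ _ hv, ← zpow_add₀ h0, tri_eq, neg_one_zpow_eq]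
    refine and_congr_right fun hEven => ?_
    have hs : ((-1 : ℂ)) ^ (εx * b + εy * d) = (-1) ^ εy :=
      (neg_one_zpow_eq _ _).mpr hEven
    rw [hs, mul_right_inj' hsy]
    constructor <;> intro h <;> linear_combination h
  have rel3 : X * Y = Y * X := by
    apply Subtype.ext
    rw [Matrix.SpecialLinearGroup.coe_mul, Matrix.SpecialLinearGroup.coe_mul,
      hX, hY, prod_tri, prod_tri, mul_comm, add_comm]
  have ps1 : Even (εx * a + εy * c - εx) ↔ Even ((a + 1) * εx + c * εy) := by
    rw [show (a + 1) * εx + c * εy = (εx * a + εy * c - εx) + 2 * εx by ring, Int.even_add]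
    simp [Int.even_mul]
  have ps2 : Even (εx * b + εy * d - εy) ↔ Even (b * εx + (d + 1) * εy) := by
    rw [show b * εx + (d + 1) * εy = (εx * b + εy * d - εy) + 2 * εy by ring, Int.even_add]
    simp [Int.even_mul]
  rw [rel1, rel2]
  constructor
  · rintro ⟨⟨p1, e1⟩, ⟨p2, e2⟩, -⟩
    obtain ⟨hu, hvv⟩ := (alg a b c d h1 hcC u v hv).mp ⟨e1, e2⟩
    exact ⟨hu, hvv, ps1.mp p1, ps2.mp p2⟩
  · rintro ⟨hu, hvv, p1, p2⟩
    obtain ⟨e1, e2⟩ := (alg a b c d h1 hcC u v hv).mpr ⟨hu, hvv⟩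
    exact ⟨⟨ps1.mpr p1, e1⟩, ⟨ps2.mpr p2, e2⟩, rel3⟩
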